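/- Let X and Y be finite-dimensional complex Hilbert spaces, |φ⟩ a unit vector in X, and ρ a density matrix on X ⊗ Y. Then the trace norm of ρ − |φ⟩⟨φ| ⊗ Tr_X(ρ) is at most 4·√(1 − ⟨φ|Tr_Y(ρ)|φ⟩). -/

import Mathlib

open scoped ComplexOrder

open Matrix Finset in
open scoped MatrixOrder Matrix.Norms.L2Operator in
/-- The trace norm `Tr √(AᴴA)` of a complex square matrix. -/
noncomputable def traceNorm {n : Type*} [Fintype n] [DecidableEq n] (A : Matrix n n ℂ) : ℝ :=
  ((CFC.sqrt (Aᴴ * A)).trace).re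

section TraceNormAux

open Matrix
open scoped MatrixOrder Matrix.Norms.L2Operator

/-- `re Tr (Mᴴ M) ≥ 0`. -/
lemma aux_re_nonneg {n : Type*} [Fintype n] [DecidableEq n] (M : Matrix n n ℂ) :
    0 ≤ ((Mᴴ * M).trace).re := by
  have h : (Mᴴ * M).trace = ∑ j, ∑ i, (starRingEnd ℂ) (M i j) * M i j := by
    simp [Matrix.trace, Matrix.diag, Matrix.mul_apply, Matrix.conjTranspose_apply]
  rw [h, Complex.re_sum]
  refine Finset.sum_nonneg fun j _ => ?_
  rw [Complex.re_sum]
  refine Finset.sum_nonneg fun i _ => ?_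
  rw [← Complex.normSq_eq_conj_mul_self]
  exact Complex.normSq_nonneg _

lemma aux_re_trace_sq {n : Type*} [Fintype n] [DecidableEq n] (M : Matrix n n ℂ) :
    ((Mᴴ * M).trace).re = ∑ p : n × n, ‖M p.2 p.1‖ ^ 2 := by
  have h : (Mᴴ * M).trace = ∑ j, ∑ i, (starRingEnd ℂ) (M i j) * M i j := by
    simp [Matrix.trace, Matrix.diag, Matrix.mul_apply, Matrix.conjTranspose_apply]
  rw [h, Complex.re_sum, ← Finset.univ_product_univ, Finset.sum_product]
  refine Finset.sum_congr rfl fun i _ => ?_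
  rw [Complex.re_sum]
  refine Finset.sum_congr rfl fun j _ => ?_
  rw [← Complex.normSq_eq_conj_mul_self, Complex.normSq_eq_norm_sq,
    Complex.ofReal_re]

/-- Cauchy-Schwarz for the Frobenius inner product. -/
lemma aux_cs {n : Type*} [Fintype n] [DecidableEq n] (A B : Matrix n n ℂ) :
    ((Aᴴ * B).trace).re ≤
      Real.sqrt ((Aᴴ * A).trace).re * Real.sqrt ((Bᴴ * B).trace).re := by
  have h1 : ((Aᴴ * B).trace).re ≤ ∑ p : n × n, ‖A p.2 p.1‖ * ‖B p.2 p.1‖ := by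
    have h : (Aᴴ * B).trace = ∑ j, ∑ i, (starRingEnd ℂ) (A i j) * B i j := by
      simp [Matrix.trace, Matrix.diag, Matrix.mul_apply, Matrix.conjTranspose_apply]
    rw [h, Complex.re_sum, ← Finset.univ_product_univ, Finset.sum_product]
    refine Finset.sum_le_sum fun j _ => ?_
    rw [Complex.re_sum]
    refine Finset.sum_le_sum fun i _ => ?_
    calc ((starRingEnd ℂ) (A i j) * B i j).re ≤ ‖(starRingEnd ℂ) (A i j) * B i j‖ :=
          Complex.re_le_norm _
      _ = ‖A i j‖ * ‖B i j‖ := by rw [norm_mul, RCLike.norm_conj]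
  have hcs := Finset.sum_mul_sq_le_sq_mul_sq Finset.univ
      (fun p : n × n => ‖A p.2 p.1‖) (fun p : n × n => ‖B p.2 p.1‖)
  have h2 : ∑ p : n × n, ‖A p.2 p.1‖ * ‖B p.2 p.1‖ ≤
      Real.sqrt (∑ p : n × n, ‖A p.2 p.1‖ ^ 2) * Real.sqrt (∑ p : n × n, ‖B p.2 p.1‖ ^ 2) := by
    rw [← Real.sqrt_mul (by positivity)]
    have := Real.sqrt_le_sqrt hcs
    rwa [Real.sqrt_sq (by positivity)] at this
  rw [aux_re_trace_sq, aux_re_trace_sq]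
  exact h1.trans h2

lemma aux_conj_trace_nonneg {n : Type*} [Fintype n] [DecidableEq n]
    {K : Matrix n n ℂ} (hK : K.PosSemidef) (M : Matrix n n ℂ) :
    0 ≤ ((Mᴴ * K * M).trace).re := by
  have h : Mᴴ * K * M = (CFC.sqrt K * M)ᴴ * (CFC.sqrt K * M) := by
    conv_lhs => rw [← CFC.sqrt_mul_sqrt_self K hK.nonneg]
    rw [conjTranspose_mul, (CFC.sqrt_nonneg K).posSemidef.1]
    simp only [Matrix.mul_assoc]
  rw [h]
  exact aux_re_nonneg _

lemma aux_psd_trace_re_nonneg {n : Type*} [Fintype n] [DecidableEq n]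
    {K : Matrix n n ℂ} (hK : K.PosSemidef) : 0 ≤ (K.trace).re := by
  have h : K = (CFC.sqrt K)ᴴ * CFC.sqrt K := by
    rw [(CFC.sqrt_nonneg K).posSemidef.1, CFC.sqrt_mul_sqrt_self K hK.nonneg]
  rw [h]
  exact aux_re_nonneg _

lemma aux_bound4 {n : Type*} [Fintype n] [DecidableEq n] (V M : Matrix n n ℂ)
    (hK : Matrix.PosSemidef (1 + 1 + 1 + 1 - V * V)) :
    ((Mᴴ * (V * V) * M).trace).re ≤ 4 * ((Mᴴ * M).trace).re := by
  have h := aux_conj_trace_nonneg hK M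
  have e : Mᴴ * (1 + 1 + 1 + 1 - V * V) * M
      = Mᴴ * M + Mᴴ * M + Mᴴ * M + Mᴴ * M - Mᴴ * (V * V) * M := by
    noncomm_ring
  rw [e, Matrix.trace_sub, Matrix.trace_add, Matrix.trace_add, Matrix.trace_add,
    Complex.sub_re, Complex.add_re, Complex.add_re, Complex.add_re] at h
  linarith

open Finset in
/-- Duality/polar decomposition for Hermitian matrices: the trace norm is realized as
`re Tr (W Δ)` for a Hermitian unitary involution `W`. -/
lemma aux_dual {n : Type*} [Fintype n] [DecidableEq n] (Δ : Matrix n n ℂ)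
    (hΔ : Δ.IsHermitian) :
    ∃ W : Matrix n n ℂ, W.IsHermitian ∧ W * W = 1 ∧
      traceNorm Δ = ((W * Δ).trace).re := by
  set U : Matrix n n ℂ := (hΔ.eigenvectorUnitary : Matrix n n ℂ) with hU
  have hU1 : U * star U = 1 := mem_unitaryGroup_iff.mp hΔ.eigenvectorUnitary.2
  have hU2 : star U * U = 1 := mem_unitaryGroup_iff'.mp hΔ.eigenvectorUnitary.2
  have key : ∀ f g : n → ℝ, (U * diagonal ((↑) ∘ f) * star U) *
      (U * diagonal ((↑) ∘ g) * star U) = U * diagonal ((↑) ∘ (f * g)) * star U := by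
    intro f g
    calc (U * diagonal ((↑) ∘ f) * star U) * (U * diagonal ((↑) ∘ g) * star U)
        = U * (diagonal ((↑) ∘ f) * (star U * U) * diagonal ((↑) ∘ g)) * star U := by
          simp only [Matrix.mul_assoc]
      _ = U * diagonal ((↑) ∘ (f * g)) * star U := by
          rw [hU2, Matrix.mul_one, diagonal_mul_diagonal]
          have h1 : ((↑) ∘ (f * g) : n → ℂ) = ((↑) ∘ f) * ((↑) ∘ g) := by
            funext i; simp
          rw [h1]
          rfl
  have hcast1 : ∀ f : n → ℝ, f = (fun _ => (1:ℝ)) →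
      U * diagonal ((↑) ∘ f) * star U = 1 := by
    intro f hf
    subst hf
    have h1 : diagonal ((↑) ∘ (fun _ => (1:ℝ)) : n → ℂ) = (1 : Matrix n n ℂ) := by
      ext i j
      by_cases h : i = j <;> simp [Matrix.diagonal_apply, Matrix.one_apply, h]
    rw [h1, Matrix.mul_one, hU1]
  set s : n → ℝ := fun i => if 0 ≤ hΔ.eigenvalues i then 1 else -1 with hs
  have hss : s * s = fun _ => (1:ℝ) := by
    funext i
    by_cases h : 0 ≤ hΔ.eigenvalues i <;> simp [hs, h]
  set W : Matrix n n ℂ := U * diagonal ((↑) ∘ s) * star U with hW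
  have hWH : W.IsHermitian := by
    have hdiagH : (diagonal ((↑) ∘ s : n → ℂ))ᴴ = diagonal ((↑) ∘ s) := by
      rw [diagonal_conjTranspose]
      have h1 : star ((↑) ∘ s : n → ℂ) = ((↑) ∘ s : n → ℂ) := by
        funext i; exact Complex.conj_ofReal _
      rw [h1]
    rw [IsHermitian, hW, conjTranspose_mul, conjTranspose_mul, hdiagH,
      star_eq_conjTranspose, conjTranspose_conjTranspose, ← star_eq_conjTranspose,
      Matrix.mul_assoc]
  have hWW : W * W = 1 := by
    rw [hW, key, hss]
    exact hcast1 _ rfl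
  have hspec : Δ = U * diagonal ((↑) ∘ hΔ.eigenvalues) * star U := hΔ.spectral_theorem
  have habs : s * hΔ.eigenvalues = fun i => |hΔ.eigenvalues i| := by
    funext i
    by_cases h : 0 ≤ hΔ.eigenvalues i
    · simp [hs, h, abs_of_nonneg h]
    · simp [hs, h, abs_of_neg (lt_of_not_ge h)]
  have hWΔ : W * Δ = U * diagonal ((↑) ∘ fun i => |hΔ.eigenvalues i|) * star U := by
    conv_lhs => rw [hW, hspec]
    rw [key, habs]
  have hBpsd : Matrix.PosSemidef (U * diagonal ((↑) ∘ fun i => |hΔ.eigenvalues i|) * star U) := by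
    have hd : Matrix.PosSemidef (diagonal ((↑) ∘ fun i => |hΔ.eigenvalues i| : n → ℂ)) := by
      refine posSemidef_diagonal_iff.mpr fun i => ?_
      simp only [Function.comp_apply]
      rw [Complex.le_def]
      simp [abs_nonneg]
    have := hd.mul_mul_conjTranspose_same U
    rwa [← star_eq_conjTranspose] at this
  have hB2 : (U * diagonal ((↑) ∘ fun i => |hΔ.eigenvalues i|) * star U) ^ 2 = Δᴴ * Δ := by
    rw [hΔ.eq, pow_two, key]
    conv_rhs => rw [hspec]
    rw [key]
    have h1 : ((fun i => |hΔ.eigenvalues i|) * fun i => |hΔ.eigenvalues i|)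
        = hΔ.eigenvalues * hΔ.eigenvalues := by
      funext i
      simp only [Pi.mul_apply]
      rw [← abs_mul, abs_mul_self]
    rw [h1]
  have hsqrt : CFC.sqrt (Δᴴ * Δ)
      = U * diagonal ((↑) ∘ fun i => |hΔ.eigenvalues i|) * star U := by
    rw [← hB2]; exact CFC.sqrt_sq _ hBpsd.nonneg
  exact ⟨W, hWH, hWW, by rw [traceNorm, hsqrt, hWΔ]⟩

end TraceNormAux

section EmbAux

open Matrix Kronecker

variable {X Y : Type*} [Fintype X] [DecidableEq X] [Fintype Y] [DecidableEq Y]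

set_option linter.unusedSectionVars false

/-- Embedding `M ↦ 1 ⊗ M`. -/
noncomputable def embY (M : Matrix Y Y ℂ) : Matrix (X × Y) (X × Y) ℂ :=
  (1 : Matrix X X ℂ) ⊗ₖ M

lemma embY_conjTranspose (M : Matrix Y Y ℂ) :
    (embY (X := X) M)ᴴ = embY Mᴴ := by
  ext ⟨i, j⟩ ⟨i', j'⟩
  simp [embY, Matrix.conjTranspose_apply, Matrix.kronecker_apply, Matrix.one_apply, eq_comm]
  split <;> simp

lemma embY_mul (M N : Matrix Y Y ℂ) :
    embY (X := X) M * embY N = embY (M * N) := by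
  simp only [embY, ← Matrix.mul_kronecker_mul, Matrix.one_mul]

lemma embY_one : embY (X := X) (1 : Matrix Y Y ℂ) = 1 := Matrix.one_kronecker_one

lemma embY_sub (M N : Matrix Y Y ℂ) :
    embY (X := X) (M - N) = embY M - embY N := by
  ext ⟨i, j⟩ ⟨i', j'⟩
  simp [embY, Matrix.kronecker_apply, Matrix.sub_apply, mul_sub]

lemma embY_posSemidef {M : Matrix Y Y ℂ} (hM : M.PosSemidef) :
    (embY (X := X) M).PosSemidef := by
  refine posSemidef_iff_dotProduct_mulVec.mpr ⟨?_, ?_⟩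
  · rw [Matrix.IsHermitian, embY_conjTranspose, hM.1.eq]
  · intro x
    have h : dotProduct (star x) (embY (X := X) M *ᵥ x)
        = ∑ i : X, dotProduct (star fun j => x (i, j)) (M *ᵥ fun j => x (i, j)) := by
      simp only [dotProduct, Matrix.mulVec, dotProduct, embY,
        Matrix.kronecker_apply, Matrix.one_apply, Pi.star_apply]
      rw [← Finset.univ_product_univ]
      simp only [Finset.sum_product]
      refine Finset.sum_congr rfl fun i _ => ?_
      refine Finset.sum_congr rfl fun j _ => ?_
      congr 1
      simp [Matrix.one_apply, ite_mul, zero_mul, Finset.sum_ite_eq]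
    rw [h]
    exact Finset.sum_nonneg fun i _ => hM.dotProduct_mulVec_nonneg _

lemma trace_embY_mul (M : Matrix Y Y ℂ) (ρ : Matrix (X × Y) (X × Y) ℂ) :
    (embY M * ρ).trace = (M * Matrix.of (fun j j' => ∑ i, ρ (i, j) (i, j'))).trace := by
  have lhs : (embY M * ρ).trace = ∑ i : X, ∑ j : Y, ∑ j' : Y, M j j' * ρ (i, j') (i, j) := by
    simp only [Matrix.trace, Matrix.diag, Matrix.mul_apply, embY, Matrix.kronecker_apply,
      Matrix.one_apply]
    rw [← Finset.univ_product_univ]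
    simp only [Finset.sum_product]
    refine Finset.sum_congr rfl fun i _ => Finset.sum_congr rfl fun j _ => ?_
    simp [Matrix.one_apply, ite_mul, zero_mul, Finset.sum_ite_eq]
  have rhs : (M * Matrix.of (fun j j' => ∑ i, ρ (i, j) (i, j'))).trace
      = ∑ j : Y, ∑ j' : Y, ∑ i : X, M j j' * ρ (i, j') (i, j) := by
    simp [Matrix.trace, Matrix.diag, Matrix.mul_apply, Finset.mul_sum]
  rw [lhs, rhs, Finset.sum_comm]
  exact Finset.sum_congr rfl fun j _ => by rw [Finset.sum_comm]

end EmbAux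

open Matrix Finset Kronecker in
/-- Lemma 3.2: for a unit vector `φ` on `X` and a density matrix `ρ` on `X ⊗ Y`,
`‖ρ − |φ⟩⟨φ| ⊗ Tr_X ρ‖₁ ≤ 4 √(1 − ⟨φ| Tr_Y ρ |φ⟩)`. -/
theorem stmt0 {X Y : Type*} [Fintype X] [DecidableEq X] [Fintype Y] [DecidableEq Y]
    (φ : X → ℂ) (hφ : ∑ i, ‖φ i‖ ^ 2 = 1)
    (ρ : Matrix (X × Y) (X × Y) ℂ) (hρ : ρ.PosSemidef) (hρ1 : ρ.trace = 1)
    -- partial trace of ρ over X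
    (ρY : Matrix Y Y ℂ) (hρY : ∀ j j', ρY j j' = ∑ i, ρ (i, j) (i, j'))
    -- partial trace of ρ over Y
    (ρX : Matrix X X ℂ) (hρX : ∀ i i', ρX i i' = ∑ j, ρ (i, j) (i', j)) :
    traceNorm (ρ - (Matrix.vecMulVec φ (star φ)) ⊗ₖ ρY)
      ≤ 4 * Real.sqrt (1 - (star φ ⬝ᵥ (ρX *ᵥ φ)).re) := by
  classical
  -- the isometry `A : Y → X ⊗ Y`, `A = |φ⟩ ⊗ 1`
  set Aφ : Matrix (X × Y) Y ℂ :=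
    Matrix.of (fun p j => φ p.1 * (if p.2 = j then 1 else 0)) with hAdef
  have hsum1 : (∑ i, (starRingEnd ℂ) (φ i) * φ i) = 1 := by
    have h1 : ∀ i, (starRingEnd ℂ) (φ i) * φ i = ((‖φ i‖^2 : ℝ) : ℂ) := fun i => by
      rw [← Complex.normSq_eq_conj_mul_self, Complex.normSq_eq_norm_sq]
    calc (∑ i, (starRingEnd ℂ) (φ i) * φ i) = ∑ i, ((‖φ i‖^2 : ℝ) : ℂ) :=
          Finset.sum_congr rfl fun i _ => h1 i
      _ = ((∑ i, ‖φ i‖^2 : ℝ) : ℂ) := by push_cast; ring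
      _ = 1 := by rw [hφ, Complex.ofReal_one]
  have hAA : Aφᴴ * Aφ = 1 := by
    ext j j'
    simp only [Matrix.mul_apply, Matrix.conjTranspose_apply, hAdef, Matrix.of_apply]
    rw [← Finset.univ_product_univ]
    simp only [Finset.sum_product]
    simp only [star_mul', mul_ite, ite_mul, mul_one, mul_zero, zero_mul, one_mul,
      apply_ite (star : ℂ → ℂ), star_one, star_zero]
    by_cases h : j = j'
    · subst h
      simp [Matrix.one_apply]
      exact hsum1
    · simp [Matrix.one_apply, h, Finset.sum_ite_eq]
      intro h'
      exact absurd h'.symm h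
  -- entrywise Hermitian transfer for ρ
  have hρH : ∀ p q : X × Y, ρ p q = star (ρ q p) := fun p q => by
    conv_lhs => rw [← hρ.1.eq]
    rfl
  -- ρY is Hermitian
  have hρYH : ρYᴴ = ρY := by
    ext j j'
    rw [Matrix.conjTranspose_apply, hρY, hρY, star_sum]
    exact Finset.sum_congr rfl fun i _ => (hρH (i, j) (i, j')).symm
  -- `A ρY Aᴴ = |φ⟩⟨φ| ⊗ ρY`
  have hkron : Aφ * ρY * Aφᴴ = (Matrix.vecMulVec φ (star φ)) ⊗ₖ ρY := by
    ext ⟨i, j⟩ ⟨i', j'⟩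
    simp only [Matrix.mul_apply, Matrix.conjTranspose_apply, hAdef, Matrix.of_apply,
      Matrix.kronecker_apply, Matrix.vecMulVec_apply, Pi.star_apply,
      star_mul', apply_ite (star : ℂ → ℂ), star_one, star_zero,
      mul_ite, ite_mul, mul_one, mul_zero, zero_mul, one_mul]
    simp [Finset.sum_ite_eq, Finset.sum_ite_eq', mul_comm, mul_assoc, mul_left_comm]
  -- compression of `1 ⊗ M` by `A` is `M`
  have hcomp : ∀ M : Matrix Y Y ℂ, Aφᴴ * embY (X := X) M * Aφ = M := by
    intro M
    have h1 : Aφᴴ * embY (X := X) M = Matrix.of (fun j q => (starRingEnd ℂ) (φ q.1) * M j q.2) := by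
      ext j ⟨i', k'⟩
      simp only [Matrix.mul_apply, Matrix.conjTranspose_apply, hAdef, Matrix.of_apply,
        embY, Matrix.kronecker_apply, Matrix.one_apply,
        star_mul', apply_ite (star : ℂ → ℂ), star_one, star_zero,
        mul_ite, ite_mul, mul_one, mul_zero, zero_mul, one_mul]
      rw [← Finset.univ_product_univ]
      simp only [Finset.sum_product]
      simp [Matrix.one_apply, Finset.sum_ite_eq, Finset.sum_ite_eq']
    rw [h1]
    ext j j'
    simp only [Matrix.mul_apply, hAdef, Matrix.of_apply,
      mul_ite, ite_mul, mul_one, mul_zero, zero_mul, one_mul]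
    rw [← Finset.univ_product_univ]
    simp only [Finset.sum_product]
    simp only [Finset.sum_ite_eq', Finset.mem_univ, if_pos]
    rw [show (∑ i : X, (starRingEnd ℂ) (φ i) * M j j' * φ i)
        = (∑ i : X, (starRingEnd ℂ) (φ i) * φ i) * M j j' from by
      rw [Finset.sum_mul]; exact Finset.sum_congr rfl fun i _ => by ring, hsum1, one_mul]
  -- `Tr (Aᴴ ρ A) = ⟨φ| Tr_Y ρ |φ⟩`
  have htrσ : (Aφᴴ * ρ * Aφ).trace = star φ ⬝ᵥ ρX *ᵥ φ := by
    have hL : (Aφᴴ * ρ * Aφ).trace = ∑ j : Y, ∑ i' : X, ∑ i : X,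
        (starRingEnd ℂ) (φ i) * ρ (i, j) (i', j) * φ i' := by
      simp only [Matrix.trace, Matrix.diag, Matrix.mul_apply, Matrix.conjTranspose_apply,
        hAdef, Matrix.of_apply, star_mul', apply_ite (star : ℂ → ℂ), star_one, star_zero,
        mul_ite, ite_mul, mul_one, mul_zero, zero_mul, one_mul, Finset.sum_mul, Finset.mul_sum]
      rw [← Finset.univ_product_univ]
      simp only [Finset.sum_product]
      refine Finset.sum_congr rfl fun j _ => ?_
      simp only [Finset.sum_ite_eq, Finset.sum_ite_eq', Finset.mem_univ, if_pos, if_true]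
      rfl
    have hR : star φ ⬝ᵥ ρX *ᵥ φ = ∑ i : X, ∑ i' : X, ∑ j : Y,
        (starRingEnd ℂ) (φ i) * ρ (i, j) (i', j) * φ i' := by
      simp only [dotProduct, Matrix.mulVec, Pi.star_apply, dotProduct,
        RCLike.star_def]
      refine Finset.sum_congr rfl fun i _ => ?_
      rw [Finset.mul_sum]
      refine Finset.sum_congr rfl fun i' _ => ?_
      rw [hρX, Finset.sum_mul, Finset.mul_sum]
      exact Finset.sum_congr rfl fun j _ => by ring
    rw [hL, hR, Finset.sum_comm]
    refine Eq.trans (Finset.sum_congr rfl fun i' _ => by rw [Finset.sum_comm]) ?_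
    rw [Finset.sum_comm]
  -- the Hermitian difference
  have hΔH : (ρ - Aφ * ρY * Aφᴴ).IsHermitian := by
    have h2 : (Aφ * ρY * Aφᴴ)ᴴ = Aφ * ρY * Aφᴴ := by
      rw [conjTranspose_mul, conjTranspose_mul, conjTranspose_conjTranspose, hρYH,
        Matrix.mul_assoc]
    exact Matrix.IsHermitian.sub hρ.1 h2
  obtain ⟨W, hWH, hWW, htn⟩ := aux_dual _ hΔH
  rw [← hkron]
  -- notation
  obtain ⟨R, hRH, hRR⟩ : ∃ R : Matrix (X × Y) (X × Y) ℂ, Rᴴ = R ∧ R * R = ρ := by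
    open scoped MatrixOrder Matrix.Norms.L2Operator in
    exact ⟨CFC.sqrt ρ, (CFC.sqrt_nonneg ρ).posSemidef.1, CFC.sqrt_mul_sqrt_self ρ hρ.nonneg⟩
  set Wt : Matrix Y Y ℂ := Aφᴴ * W * Aφ with hWtdef
  have hWtH : Wtᴴ = Wt := by
    rw [hWtdef, conjTranspose_mul, conjTranspose_mul, conjTranspose_conjTranspose, hWH.eq,
      Matrix.mul_assoc]
  set T : Matrix (X × Y) (X × Y) ℂ := embY Wt with hTdef
  have hTH : Tᴴ = T := by rw [hTdef, embY_conjTranspose, hWtH]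
  set V : Matrix (X × Y) (X × Y) ℂ := W - T with hVdef
  have hVH : Vᴴ = V := by rw [hVdef, conjTranspose_sub, hWH.eq, hTH]
  set P : Matrix (X × Y) (X × Y) ℂ := Aφ * Aφᴴ with hPdef
  have hPH : Pᴴ = P := by rw [hPdef, conjTranspose_mul, conjTranspose_conjTranspose]
  have hPP : P * P = P := by
    rw [hPdef]
    calc Aφ * Aφᴴ * (Aφ * Aφᴴ) = Aφ * (Aφᴴ * Aφ) * Aφᴴ := by
          simp only [Matrix.mul_sub, Matrix.sub_mul, Matrix.mul_add, Matrix.add_mul,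
        Matrix.mul_one, Matrix.one_mul, Matrix.mul_assoc]
      _ = Aφ * Aφᴴ := by rw [hAA, Matrix.mul_one]
  set Q : Matrix (X × Y) (X × Y) ℂ := 1 - P with hQdef
  have hQH : Qᴴ = Q := by rw [hQdef, conjTranspose_sub, conjTranspose_one, hPH]
  have hQQ : Q * Q = Q := by
    rw [hQdef]
    calc (1 - P) * (1 - P) = 1 - P - (P - P * P) := by noncomm_ring
      _ = 1 - P := by rw [hPP]; abel
  -- positivity of `4 − V²`
  have hWt2 : (1 : Matrix Y Y ℂ) - Wt * Wt = (W * Aφ)ᴴ * Q * (W * Aφ) := by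
    have e : (W * Aφ)ᴴ * (1 - Aφ * Aφᴴ) * (W * Aφ)
        = Aφᴴ * (W * W) * Aφ - Aφᴴ * W * (Aφ * (Aφᴴ * (W * Aφ))) := by
      rw [conjTranspose_mul, hWH.eq]
      simp only [Matrix.mul_sub, Matrix.sub_mul, Matrix.mul_add, Matrix.add_mul,
        Matrix.mul_one, Matrix.one_mul, Matrix.mul_assoc]
    rw [hQdef, hPdef, e, hWW, Matrix.mul_one, hAA]
    rw [hWtdef]
    congr 1
    simp only [Matrix.mul_sub, Matrix.sub_mul, Matrix.mul_add, Matrix.add_mul,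
        Matrix.mul_one, Matrix.one_mul, Matrix.mul_assoc]
  have hQpsd : Q.PosSemidef := by
    have h : Qᴴ * Q = Q := by rw [hQH, hQQ]
    rw [← h]
    exact posSemidef_conjTranspose_mul_self Q
  have hWtpsd : ((1 : Matrix Y Y ℂ) - Wt * Wt).PosSemidef := by
    rw [hWt2]
    exact hQpsd.conjTranspose_mul_mul_same (W * Aφ)
  have hTTpsd : ((1 : Matrix (X × Y) (X × Y) ℂ) - T * T).PosSemidef := by
    have h : (1 : Matrix (X × Y) (X × Y) ℂ) - T * T = embY (1 - Wt * Wt) := by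
      rw [hTdef, embY_mul, embY_sub, embY_one]
    rw [h]
    exact embY_posSemidef hWtpsd
  have hKpsd : Matrix.PosSemidef ((1 : Matrix (X × Y) (X × Y) ℂ) + 1 + 1 + 1 - V * V) := by
    have hid : (1 : Matrix (X × Y) (X × Y) ℂ) + 1 + 1 + 1 - V * V
        = (W + T)ᴴ * (W + T) + ((1 - T * T) + (1 - T * T))
          + ((1 - W * W) + (1 - W * W)) := by
      rw [conjTranspose_add, hWH.eq, hTH, hVdef]
      noncomm_ring
    rw [hid, hWW]
    simp only [sub_self, add_zero]
    exact (posSemidef_conjTranspose_mul_self (W + T)).add (hTTpsd.add hTTpsd)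
  -- the error parameter
  set ε : ℝ := 1 - (star φ ⬝ᵥ ρX *ᵥ φ).re with hεdef
  have hσpsd : (Aφᴴ * ρ * Aφ).PosSemidef := hρ.conjTranspose_mul_mul_same Aφ
  have hσ_re : ((Aφᴴ * ρ * Aφ).trace).re = 1 - ε := by rw [htrσ, hεdef]; ring
  have hσ_nonneg : 0 ≤ ((Aφᴴ * ρ * Aφ).trace).re := aux_psd_trace_re_nonneg hσpsd
  have hQRtrace : (((Q * R)ᴴ * (Q * R)).trace).re = ε := by
    have e1 : (Q * R)ᴴ * (Q * R) = (R * Q) * (Q * R) := by rw [conjTranspose_mul, hQH, hRH]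
    have e2 : (Q * R) * (R * Q) = Q * ρ * Q := by rw [← hRR]; noncomm_ring
    have e3 : Q * Q * ρ = ρ - Aφ * (Aφᴴ * ρ) := by
      rw [hQQ, hQdef, hPdef]
      simp only [Matrix.mul_sub, Matrix.sub_mul, Matrix.mul_add, Matrix.add_mul,
        Matrix.mul_one, Matrix.one_mul, Matrix.mul_assoc]
    rw [e1, Matrix.trace_mul_comm (R * Q) (Q * R), e2, Matrix.trace_mul_cycle, e3,
      Matrix.trace_sub, Matrix.trace_mul_comm Aφ (Aφᴴ * ρ), hρ1,
      Complex.sub_re, Complex.one_re, hσ_re]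
    ring
  have hε_nonneg : 0 ≤ ε := hQRtrace ▸ aux_re_nonneg (Q * R)
  -- step A : `Tr (W Δ) = Tr (V ρ)`
  have hρYof : Matrix.of (fun j j' => ∑ i, ρ (i, j) (i, j')) = ρY := by
    ext j j'
    rw [Matrix.of_apply, hρY]
  have hstepA : (W * (ρ - Aφ * ρY * Aφᴴ)).trace = (V * ρ).trace := by
    have e1 : W * (ρ - Aφ * ρY * Aφᴴ) = W * ρ - (W * Aφ * ρY) * Aφᴴ := by
      simp only [Matrix.mul_sub, Matrix.sub_mul, Matrix.mul_add, Matrix.add_mul,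
        Matrix.mul_one, Matrix.one_mul, Matrix.mul_assoc]
    have e2 : Aφᴴ * (W * Aφ * ρY) = Wt * ρY := by
      rw [hWtdef]
      simp only [Matrix.mul_sub, Matrix.sub_mul, Matrix.mul_add, Matrix.add_mul,
        Matrix.mul_one, Matrix.one_mul, Matrix.mul_assoc]
    rw [e1, Matrix.trace_sub, Matrix.trace_mul_comm (W * Aφ * ρY) Aφᴴ, e2, ← hρYof,
      ← trace_embY_mul, ← hTdef, hVdef, Matrix.sub_mul, Matrix.trace_sub]
  -- step B : split `ρ = Qρ + PρQ + PρP` and kill the last term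
  have hsplit : V * ρ = V * (Q * ρ) + V * (P * (ρ * Q)) + V * (P * (ρ * P)) := by
    rw [hQdef]; noncomm_ring
  have hzero : (V * (P * (ρ * P))).trace = 0 := by
    have e1 : V * (P * (ρ * P)) = (V * Aφ * (Aφᴴ * ρ * Aφ)) * Aφᴴ := by
      rw [hPdef]
      simp only [Matrix.mul_sub, Matrix.sub_mul, Matrix.mul_add, Matrix.add_mul,
        Matrix.mul_one, Matrix.one_mul, Matrix.mul_assoc]
    have e2 : Aφᴴ * (V * Aφ * (Aφᴴ * ρ * Aφ)) = (Aφᴴ * V * Aφ) * (Aφᴴ * ρ * Aφ) := by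
      simp only [Matrix.mul_sub, Matrix.sub_mul, Matrix.mul_add, Matrix.add_mul,
        Matrix.mul_one, Matrix.one_mul, Matrix.mul_assoc]
    have e3 : Aφᴴ * V * Aφ = 0 := by
      have h : Aφᴴ * V * Aφ = Aφᴴ * W * Aφ - Aφᴴ * (embY (X := X) Wt) * Aφ := by
        rw [hVdef, hTdef]
        simp only [Matrix.mul_sub, Matrix.sub_mul, Matrix.mul_add, Matrix.add_mul,
        Matrix.mul_one, Matrix.one_mul, Matrix.mul_assoc]
      rw [h, hcomp Wt, ← hWtdef, sub_self]
    rw [e1, Matrix.trace_mul_comm (V * Aφ * (Aφᴴ * ρ * Aφ)) Aφᴴ, e2, e3,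
      Matrix.zero_mul, Matrix.trace_zero]
  have hsum_tr : ((W * (ρ - Aφ * ρY * Aφᴴ)).trace).re
      = ((V * (Q * ρ)).trace).re + ((V * (P * (ρ * Q))).trace).re := by
    rw [hstepA, hsplit, Matrix.trace_add, Matrix.trace_add, hzero, add_zero, Complex.add_re]
  -- step C : Cauchy-Schwarz bounds
  have sqrt4 : Real.sqrt 4 = 2 := by
    rw [show (4:ℝ) = 2^2 by norm_num, Real.sqrt_sq (by norm_num : (0:ℝ) ≤ 2)]
  have hc1 : ((V * R)ᴴ * (Q * R)).trace = (V * (Q * ρ)).trace := by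
    have e1 : (V * R)ᴴ * (Q * R) = R * (V * (Q * R)) := by
      rw [conjTranspose_mul, hVH, hRH]; noncomm_ring
    have e2 : (V * (Q * R)) * R = V * (Q * ρ) := by rw [← hRR]; noncomm_ring
    rw [e1, Matrix.trace_mul_comm R (V * (Q * R)), e2]
  have hVRnorm : (((V * R)ᴴ * (V * R)).trace).re ≤ 4 := by
    have e : (V * R)ᴴ * (V * R) = Rᴴ * (V * V) * R := by
      rw [conjTranspose_mul, hVH]; noncomm_ring
    rw [e]
    have hb := aux_bound4 V R hKpsd
    have eR : ((Rᴴ * R).trace).re = 1 := by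
      rw [hRH, hRR, hρ1, Complex.one_re]
    rw [eR] at hb
    linarith
  have ht1 : ((V * (Q * ρ)).trace).re ≤ 2 * Real.sqrt ε := by
    rw [← hc1]
    have s1 : Real.sqrt ((((V * R)ᴴ * (V * R)).trace).re) ≤ 2 := by
      have h := Real.sqrt_le_sqrt hVRnorm
      rwa [sqrt4] at h
    calc (((V * R)ᴴ * (Q * R)).trace).re
        ≤ Real.sqrt ((((V * R)ᴴ * (V * R)).trace).re)
          * Real.sqrt ((((Q * R)ᴴ * (Q * R)).trace).re) := aux_cs _ _
      _ = Real.sqrt ((((V * R)ᴴ * (V * R)).trace).re) * Real.sqrt ε := by rw [hQRtrace]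
      _ ≤ 2 * Real.sqrt ε := mul_le_mul_of_nonneg_right s1 (Real.sqrt_nonneg _)
  have hc2 : ((V * (Q * R))ᴴ * (P * R)).trace = (V * (P * (ρ * Q))).trace := by
    have e1 : (V * (Q * R))ᴴ * (P * R) = R * (Q * (V * (P * R))) := by
      rw [conjTranspose_mul, conjTranspose_mul, hVH, hQH, hRH]; noncomm_ring
    have e2 : (Q * (V * (P * R))) * R = Q * (V * (P * ρ)) := by rw [← hRR]; noncomm_ring
    have e3 : (V * (P * ρ)) * Q = V * (P * (ρ * Q)) := by noncomm_ring
    rw [e1, Matrix.trace_mul_comm R (Q * (V * (P * R))), e2,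
      Matrix.trace_mul_comm Q (V * (P * ρ)), e3]
  have hVQRnorm : (((V * (Q * R))ᴴ * (V * (Q * R))).trace).re ≤ 4 * ε := by
    have e : (V * (Q * R))ᴴ * (V * (Q * R)) = (Q * R)ᴴ * (V * V) * (Q * R) := by
      rw [conjTranspose_mul, hVH]; noncomm_ring
    rw [e]
    have hb := aux_bound4 V (Q * R) hKpsd
    rwa [hQRtrace] at hb
  have hPRnorm : (((P * R)ᴴ * (P * R)).trace).re = 1 - ε := by
    have e1 : (P * R)ᴴ * (P * R) = R * (P * (P * R)) := by
      rw [conjTranspose_mul, hPH, hRH]; noncomm_ring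
    have e2 : (P * (P * R)) * R = (P * P) * (R * R) := by noncomm_ring
    have e3 : P * ρ = Aφ * (Aφᴴ * ρ) := by
      rw [hPdef]
      simp only [Matrix.mul_sub, Matrix.sub_mul, Matrix.mul_add, Matrix.add_mul,
        Matrix.mul_one, Matrix.one_mul, Matrix.mul_assoc]
    rw [e1, Matrix.trace_mul_comm R (P * (P * R)), e2, hPP, hRR, e3,
      Matrix.trace_mul_comm Aφ (Aφᴴ * ρ)]
    exact hσ_re
  have ht2 : ((V * (P * (ρ * Q))).trace).re ≤ 2 * Real.sqrt ε := by
    rw [← hc2]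
    have s1 : Real.sqrt ((((V * (Q * R))ᴴ * (V * (Q * R))).trace).re) ≤ 2 * Real.sqrt ε := by
      have h4 : Real.sqrt (4 * ε) = 2 * Real.sqrt ε := by
        rw [Real.sqrt_mul (by norm_num : (0:ℝ) ≤ 4), sqrt4]
      calc Real.sqrt ((((V * (Q * R))ᴴ * (V * (Q * R))).trace).re)
          ≤ Real.sqrt (4 * ε) := Real.sqrt_le_sqrt hVQRnorm
        _ = 2 * Real.sqrt ε := h4
    have s2 : Real.sqrt ((((P * R)ᴴ * (P * R)).trace).re) ≤ 1 := by
      rw [hPRnorm]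
      exact Real.sqrt_le_one.mpr (by linarith)
    calc (((V * (Q * R))ᴴ * (P * R)).trace).re
        ≤ Real.sqrt ((((V * (Q * R))ᴴ * (V * (Q * R))).trace).re)
          * Real.sqrt ((((P * R)ᴴ * (P * R)).trace).re) := aux_cs _ _
      _ ≤ (2 * Real.sqrt ε) * 1 :=
          mul_le_mul s1 s2 (Real.sqrt_nonneg _) (by positivity)
      _ = 2 * Real.sqrt ε := by ring
  rw [htn, hsum_tr]
  linarith [ht1, ht2]
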